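/- A surjective morphism of simplicial groups is a Kan fibration. In particular, if f : A → B is a levelwise surjective map of simplicial abelian groups, then f is a Kan fibration. -/

import Mathlib

open CategoryTheory SSet

/-- A map of simplicial sets is a *Kan fibration* if it has the right lifting
property with respect to all horn inclusions `Λ[n, i] ⟶ Δ[n]` (`n ≥ 1`). -/
def IsKanFibration {X Y : SSet} (f : X ⟶ Y) : Prop :=
  ∀ (n : ℕ) (i : Fin (n + 2)), HasLiftingProperty (horn (n + 1) i).ι f

/-!
STATEMENT 10: A (levelwise) surjective morphism of simplicial groups is a Kan
fibration; in particular a levelwise surjective map of simplicial abelian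
groups is a Kan fibration.

A simplicial group is a functor `SimplexCategoryᵒᵖ ⥤ Grp`; its underlying
simplicial set is obtained by composing with the forgetful functor.
-/

open Simplicial Opposite

set_option linter.unusedSectionVars false

namespace MooreProof

variable {X : SSet.{0}} [∀ m : SimplexCategoryᵒᵖ, Group (X.obj m)]

section PointwiseIdentities

variable (X)

lemma dσ_self' {n : ℕ} {J : Fin (n + 2)} {r : Fin (n + 1)} (hJ : J = r.castSucc)
    (a : X _⦋n⦌) : X.δ J (X.σ r a) = a :=
  ConcreteCategory.congr_hom (X.δ_comp_σ_self' hJ) a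

lemma dσ_succ' {n : ℕ} {J : Fin (n + 2)} {r : Fin (n + 1)} (hJ : J = r.succ)
    (a : X _⦋n⦌) : X.δ J (X.σ r a) = a :=
  ConcreteCategory.congr_hom (X.δ_comp_σ_succ' hJ) a

lemma dσ_le' {n : ℕ} {J : Fin (n + 3)} {R : Fin (n + 2)} {i : Fin (n + 2)} {j : Fin (n + 1)}
    (hJ : J = i.castSucc) (hR : R = j.succ) (H : i ≤ j.castSucc) (a : X _⦋n + 1⦌) :
    X.δ J (X.σ R a) = X.σ j (X.δ i a) := by
  subst hJ hR; exact ConcreteCategory.congr_hom (X.δ_comp_σ_of_le H) a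

lemma dσ_gt' {n : ℕ} {J : Fin (n + 3)} {R : Fin (n + 2)} {i : Fin (n + 2)} {j : Fin (n + 1)}
    (hJ : J = i.succ) (hR : R = j.castSucc) (H : j.castSucc < i) (a : X _⦋n + 1⦌) :
    X.δ J (X.σ R a) = X.σ j (X.δ i a) := by
  subst hJ hR; exact ConcreteCategory.congr_hom (X.δ_comp_σ_of_gt H) a

lemma dd' {n : ℕ} {i j : Fin (n + 2)} {B C : Fin (n + 3)} (hB : B = j.succ)
    (hC : C = i.castSucc) (H : i ≤ j) (w : X _⦋n + 2⦌) :
    X.δ i (X.δ B w) = X.δ j (X.δ C w) := by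
  subst hB hC; exact ConcreteCategory.congr_hom (X.δ_comp_δ H) w

end PointwiseIdentities

variable (hmul : ∀ ⦃m m' : SimplexCategoryᵒᵖ⦄ (φ : m ⟶ m') (a b : X.obj m),
    X.map φ (a * b) = X.map φ a * X.map φ b)

/-- `X.map φ` as a monoid hom. -/
def mapHom {m m' : SimplexCategoryᵒᵖ} (φ : m ⟶ m') : X.obj m →* X.obj m' :=
  MonoidHom.mk' (X.map φ) (hmul φ)

include hmul

lemma map_mul' {m m' : SimplexCategoryᵒᵖ} (φ : m ⟶ m') (a b : X.obj m) :
    X.map φ (a * b) = X.map φ a * X.map φ b := hmul φ a b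

lemma map_inv' {m m' : SimplexCategoryᵒᵖ} (φ : m ⟶ m') (a : X.obj m) :
    X.map φ a⁻¹ = (X.map φ a)⁻¹ := (mapHom hmul φ).map_inv a

lemma map_one' {m m' : SimplexCategoryᵒᵖ} (φ : m ⟶ m') :
    X.map φ (1 : X.obj m) = 1 := (mapHom hmul φ).map_one

lemma δ_mul {n : ℕ} (j : Fin (n + 2)) (a b : X _⦋n + 1⦌) :
    X.δ j (a * b) = X.δ j a * X.δ j b :=
  (mapHom hmul ((SimplexCategory.δ j).op)).map_mul a b

lemma δ_inv {n : ℕ} (j : Fin (n + 2)) (a : X _⦋n + 1⦌) :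
    X.δ j a⁻¹ = (X.δ j a)⁻¹ :=
  (mapHom hmul ((SimplexCategory.δ j).op)).map_inv a

/-- Generic off-diagonal face computation for the Moore construction. -/
lemma face_of_cancel {m : ℕ} {g : X _⦋m + 2⦌} {R : Fin (m + 2)} {b : X _⦋m + 1⦌}
    {j JR : Fin (m + 3)} {s : Fin (m + 1)} {t : Fin (m + 2)} {v : X _⦋m + 1⦌}
    (hswap : ∀ c : X _⦋m + 1⦌, X.δ j (X.σ R c) = X.σ s (X.δ t c))
    (h1 : X.δ j g = v) (h2 : X.δ t (X.δ JR g) = X.δ t b) :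
    X.δ j (g * (X.σ R (X.δ JR g))⁻¹ * X.σ R b) = v := by
  rw [δ_mul hmul, δ_mul hmul, δ_inv hmul, hswap, hswap, h2, h1, inv_mul_cancel_right]

/-- Generic diagonal face computation for the Moore construction. -/
lemma face_of_diag {m : ℕ} {g : X _⦋m + 2⦌} {R : Fin (m + 2)} {b : X _⦋m + 1⦌}
    {j JR : Fin (m + 3)}
    (hj : j = JR) (hid : ∀ c : X _⦋m + 1⦌, X.δ j (X.σ R c) = c) :
    X.δ j (g * (X.σ R (X.δ JR g))⁻¹ * X.σ R b) = b := by
  subst hj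
  rw [δ_mul hmul, δ_mul hmul, δ_inv hmul, hid, hid, mul_inv_cancel, one_mul]

variable (P : ∀ m : SimplexCategoryᵒᵖ, Subgroup (X.obj m))
variable (hP : ∀ ⦃m m' : SimplexCategoryᵒᵖ⦄ (φ : m ⟶ m') (a : X.obj m),
    a ∈ P m → X.map φ a ∈ P m')

include hP

theorem fill_succ (m : ℕ) (i : Fin (m + 3)) (x : ∀ j : Fin (m + 3), j ≠ i → X _⦋m + 1⦌)
    (hx : ∀ (j k : Fin (m + 2)) (hjk : j ≤ k) (hj : j.castSucc ≠ i) (hk : k.succ ≠ i),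
      X.δ j (x k.succ hk) = X.δ k (x j.castSucc hj))
    (hmem : ∀ j hj, x j hj ∈ P (op ⦋m + 1⦌)) :
    ∃ g : X _⦋m + 2⦌, g ∈ P (op ⦋m + 2⦌) ∧ ∀ j hj, X.δ j g = x j hj := by
  have x_eq : ∀ {j j' : Fin (m + 3)} (_ : j = j') (hj : j ≠ i) (hj' : j' ≠ i),
      x j hj = x j' hj' := by rintro j _ rfl hj hj'; rfl
  have hi2 : (i : ℕ) ≤ m + 2 := Nat.le_of_lt_succ i.isLt
  -- Phase 1 : fill all faces with index < r, for r ≤ i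
  have phase1 : ∀ r : ℕ, r ≤ (i : ℕ) → ∃ g : X _⦋m + 2⦌, g ∈ P (op ⦋m + 2⦌) ∧
      ∀ (j : Fin (m + 3)) (hj : j ≠ i), (j : ℕ) < r → X.δ j g = x j hj := by
    intro r
    induction r with
    | zero => exact fun _ => ⟨1, one_mem _, fun j hj hlt => absurd hlt (Nat.not_lt_zero _)⟩
    | succ r ih =>
      intro hr
      obtain ⟨g, hgP, hg⟩ := ih (Nat.le_of_succ_le hr)
      have hrm : r < m + 2 := by omega
      have hrm3 : r < m + 3 := by omega
      have hjri : (⟨r, hrm3⟩ : Fin (m + 3)) ≠ i := by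
        intro h
        have : r = (i : ℕ) := congrArg Fin.val h
        omega
      refine ⟨g * (X.σ ⟨r, hrm⟩ (X.δ ⟨r, hrm3⟩ g))⁻¹ * X.σ ⟨r, hrm⟩ (x ⟨r, hrm3⟩ hjri), ?_, ?_⟩
      · exact mul_mem (mul_mem hgP (inv_mem (hP _ _ (hP _ _ hgP)))) (hP _ _ (hmem _ _))
      · intro j hj hlt
        rcases Nat.lt_succ_iff_lt_or_eq.mp hlt with hlt' | heq
        · -- (j : ℕ) < r
          have hr1 : 1 ≤ r := by omega
          have hjm : (j : ℕ) < m + 2 := by omega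
          have hr1m : r - 1 < m + 1 := by omega
          have hr1m2 : r - 1 < m + 2 := by omega
          have e₁ : j = (⟨(j : ℕ), hjm⟩ : Fin (m + 2)).castSucc := by
            simp [Fin.ext_iff]
          have e₂ : (⟨r, hrm⟩ : Fin (m + 2)) = (⟨r - 1, hr1m⟩ : Fin (m + 1)).succ := by
            simp [Fin.ext_iff]; omega
          have e₃ : (⟨r, hrm3⟩ : Fin (m + 3)) = (⟨r - 1, hr1m2⟩ : Fin (m + 2)).succ := by
            simp [Fin.ext_iff]; omega
          have e₄ : (⟨(j : ℕ), hjm⟩ : Fin (m + 2)) ≤ (⟨r - 1, hr1m⟩ : Fin (m + 1)).castSucc := by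
            simp [Fin.le_def]; omega
          have e₅ : (⟨(j : ℕ), hjm⟩ : Fin (m + 2)) ≤ ⟨r - 1, hr1m2⟩ := by
            simp [Fin.le_def]; omega
          have hj' : (⟨(j : ℕ), hjm⟩ : Fin (m + 2)).castSucc ≠ i := by rw [← e₁]; exact hj
          have hk : (⟨r - 1, hr1m2⟩ : Fin (m + 2)).succ ≠ i := by rw [← e₃]; exact hjri
          refine face_of_cancel hmul (fun c => dσ_le' X e₁ e₂ e₄ c) (hg j hj hlt') ?_
          calc X.δ (⟨(j : ℕ), hjm⟩ : Fin (m + 2)) (X.δ ⟨r, hrm3⟩ g)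
              = X.δ ⟨r - 1, hr1m2⟩ (X.δ ((⟨(j : ℕ), hjm⟩ : Fin (m + 2)).castSucc) g) :=
                dd' X e₃ rfl e₅ g
            _ = X.δ ⟨r - 1, hr1m2⟩ (x j hj) := by rw [← e₁, hg j hj hlt']
            _ = X.δ ⟨r - 1, hr1m2⟩ (x ((⟨(j : ℕ), hjm⟩ : Fin (m + 2)).castSucc) hj') := by
                rw [x_eq e₁ hj hj']
            _ = X.δ (⟨(j : ℕ), hjm⟩ : Fin (m + 2)) (x (⟨r - 1, hr1m2⟩ : Fin (m + 2)).succ hk) :=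
                (hx _ _ e₅ hj' hk).symm
            _ = X.δ (⟨(j : ℕ), hjm⟩ : Fin (m + 2)) (x ⟨r, hrm3⟩ hjri) := by
                rw [x_eq e₃.symm hk hjri]
        · -- (j : ℕ) = r
          have e₀ : j = ⟨r, hrm3⟩ := by simp [Fin.ext_iff, heq]
          have eid : ∀ c, X.δ j (X.σ ⟨r, hrm⟩ c) = c :=
            fun c => dσ_self' X (by simp [Fin.ext_iff, heq]) c
          exact (face_of_diag hmul e₀ eid).trans (x_eq e₀.symm hjri hj)
  -- Phase 2 : downward from the top
  have phase2 : ∀ t r : ℕ, r + t = m + 2 → (i : ℕ) ≤ r →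
      ∃ g : X _⦋m + 2⦌, g ∈ P (op ⦋m + 2⦌) ∧
        ∀ (j : Fin (m + 3)) (hj : j ≠ i), ((j : ℕ) < (i : ℕ) ∨ r < (j : ℕ)) →
          X.δ j g = x j hj := by
    intro t
    induction t with
    | zero =>
      intro r hrt hir
      obtain ⟨g, hgP, hg⟩ := phase1 (i : ℕ) le_rfl
      refine ⟨g, hgP, fun j hj h => hg j hj ?_⟩
      have := j.isLt
      omega
    | succ t iht =>
      intro r hrt hir
      obtain ⟨g, hgP, hg⟩ := iht (r + 1) (by omega) (by omega)
      have hr1m3 : r + 1 < m + 3 := by omega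
      have hrm : r < m + 2 := by omega
      have hjri : (⟨r + 1, hr1m3⟩ : Fin (m + 3)) ≠ i := by
        intro h
        have : r + 1 = (i : ℕ) := congrArg Fin.val h
        omega
      refine ⟨g * (X.σ ⟨r, hrm⟩ (X.δ ⟨r + 1, hr1m3⟩ g))⁻¹ *
        X.σ ⟨r, hrm⟩ (x ⟨r + 1, hr1m3⟩ hjri), ?_, ?_⟩
      · exact mul_mem (mul_mem hgP (inv_mem (hP _ _ (hP _ _ hgP)))) (hP _ _ (hmem _ _))
      · intro j hj hcond
        by_cases heq : (j : ℕ) = r + 1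
        · have e₀ : j = ⟨r + 1, hr1m3⟩ := by simp [Fin.ext_iff, heq]
          have eid : ∀ c, X.δ j (X.σ ⟨r, hrm⟩ c) = c :=
            fun c => dσ_succ' X (by simp [Fin.ext_iff, heq]) c
          exact (face_of_diag hmul e₀ eid).trans (x_eq e₀.symm hjri hj)
        · rcases hcond with hlt | hgt
          · -- (j : ℕ) < i ≤ r
            have h1r : 1 ≤ r := by omega
            have hjm : (j : ℕ) < m + 2 := by omega
            have hr1m : r - 1 < m + 1 := by omega
            have e₁ : j = (⟨(j : ℕ), hjm⟩ : Fin (m + 2)).castSucc := by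
              simp [Fin.ext_iff]
            have e₂ : (⟨r, hrm⟩ : Fin (m + 2)) = (⟨r - 1, hr1m⟩ : Fin (m + 1)).succ := by
              simp [Fin.ext_iff]; omega
            have e₃ : (⟨r + 1, hr1m3⟩ : Fin (m + 3)) = (⟨r, hrm⟩ : Fin (m + 2)).succ := by
              simp [Fin.ext_iff]
            have e₄ : (⟨(j : ℕ), hjm⟩ : Fin (m + 2)) ≤ (⟨r - 1, hr1m⟩ : Fin (m + 1)).castSucc := by
              simp [Fin.le_def]; omega
            have e₅ : (⟨(j : ℕ), hjm⟩ : Fin (m + 2)) ≤ ⟨r, hrm⟩ := by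
              simp [Fin.le_def]; omega
            have hj' : (⟨(j : ℕ), hjm⟩ : Fin (m + 2)).castSucc ≠ i := by rw [← e₁]; exact hj
            have hk : (⟨r, hrm⟩ : Fin (m + 2)).succ ≠ i := by rw [← e₃]; exact hjri
            refine face_of_cancel hmul (fun c => dσ_le' X e₁ e₂ e₄ c)
              (hg j hj (Or.inl hlt)) ?_
            calc X.δ (⟨(j : ℕ), hjm⟩ : Fin (m + 2)) (X.δ ⟨r + 1, hr1m3⟩ g)
                = X.δ ⟨r, hrm⟩ (X.δ ((⟨(j : ℕ), hjm⟩ : Fin (m + 2)).castSucc) g) :=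
                  dd' X e₃ rfl e₅ g
              _ = X.δ ⟨r, hrm⟩ (x j hj) := by rw [← e₁, hg j hj (Or.inl hlt)]
              _ = X.δ ⟨r, hrm⟩ (x ((⟨(j : ℕ), hjm⟩ : Fin (m + 2)).castSucc) hj') := by
                  rw [x_eq e₁ hj hj']
              _ = X.δ (⟨(j : ℕ), hjm⟩ : Fin (m + 2)) (x (⟨r, hrm⟩ : Fin (m + 2)).succ hk) :=
                  (hx _ _ e₅ hj' hk).symm
              _ = X.δ (⟨(j : ℕ), hjm⟩ : Fin (m + 2)) (x ⟨r + 1, hr1m3⟩ hjri) := by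
                  rw [x_eq e₃.symm hk hjri]
          · -- r + 2 ≤ (j : ℕ)
            have hgt2 : r + 2 ≤ (j : ℕ) := by omega
            have hjlt := j.isLt
            have hrm1 : r < m + 1 := by omega
            have hj1m : (j : ℕ) - 1 < m + 2 := by omega
            have hr1m2 : r + 1 < m + 2 := by omega
            have e₁ : j = (⟨(j : ℕ) - 1, hj1m⟩ : Fin (m + 2)).succ := by
              simp [Fin.ext_iff]; omega
            have e₂ : (⟨r, hrm⟩ : Fin (m + 2)) = (⟨r, hrm1⟩ : Fin (m + 1)).castSucc := by
              simp [Fin.ext_iff]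
            have e₃ : (⟨r + 1, hr1m3⟩ : Fin (m + 3)) =
                (⟨r + 1, hr1m2⟩ : Fin (m + 2)).castSucc := by
              simp [Fin.ext_iff]
            have e₄ : (⟨r, hrm1⟩ : Fin (m + 1)).castSucc < ⟨(j : ℕ) - 1, hj1m⟩ := by
              simp [Fin.lt_def]; omega
            have e₅ : (⟨r + 1, hr1m2⟩ : Fin (m + 2)) ≤ ⟨(j : ℕ) - 1, hj1m⟩ := by
              simp [Fin.le_def]; omega
            have hj'' : (⟨r + 1, hr1m2⟩ : Fin (m + 2)).castSucc ≠ i := by rw [← e₃]; exact hjri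
            have hk'' : (⟨(j : ℕ) - 1, hj1m⟩ : Fin (m + 2)).succ ≠ i := by rw [← e₁]; exact hj
            refine face_of_cancel hmul (fun c => dσ_gt' X e₁ e₂ e₄ c)
              (hg j hj (Or.inr (by omega))) ?_
            calc X.δ (⟨(j : ℕ) - 1, hj1m⟩ : Fin (m + 2)) (X.δ ⟨r + 1, hr1m3⟩ g)
                = X.δ ⟨r + 1, hr1m2⟩ (X.δ ((⟨(j : ℕ) - 1, hj1m⟩ : Fin (m + 2)).succ) g) :=
                  (dd' X rfl e₃ e₅ g).symm
              _ = X.δ ⟨r + 1, hr1m2⟩ (x j hj) := by rw [← e₁, hg j hj (Or.inr (by omega))]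
              _ = X.δ ⟨r + 1, hr1m2⟩ (x ((⟨(j : ℕ) - 1, hj1m⟩ : Fin (m + 2)).succ) hk'') := by
                  rw [x_eq e₁ hj hk'']
              _ = X.δ (⟨(j : ℕ) - 1, hj1m⟩ : Fin (m + 2))
                    (x ((⟨r + 1, hr1m2⟩ : Fin (m + 2)).castSucc) hj'') :=
                  (hx _ _ e₅ hj'' hk'')
              _ = X.δ (⟨(j : ℕ) - 1, hj1m⟩ : Fin (m + 2)) (x ⟨r + 1, hr1m3⟩ hjri) := by
                  rw [x_eq e₃.symm hj'' hjri]
  obtain ⟨g, hgP, hg⟩ := phase2 (m + 2 - (i : ℕ)) (i : ℕ) (by omega) le_rfl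
  refine ⟨g, hgP, fun j hj => hg j hj ?_⟩
  have hne : (j : ℕ) ≠ (i : ℕ) := fun hh => hj (Fin.ext hh)
  omega


omit hmul hP in
lemma horn_face_compat (m : ℕ) (i : Fin (m + 3)) (j k : Fin (m + 2)) (hjk : j ≤ k)
    (hj : j.castSucc ≠ i) (hk : k.succ ≠ i) :
    (Λ[m + 2, i] : SSet).map (SimplexCategory.δ j).op (horn.face i k.succ hk) =
      (Λ[m + 2, i] : SSet).map (SimplexCategory.δ k).op (horn.face i j.castSucc hj) := by
  apply Subtype.ext
  show Δ[m + 2].map (SimplexCategory.δ j).op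
      (stdSimplex.objEquiv.symm (SimplexCategory.δ k.succ)) =
    Δ[m + 2].map (SimplexCategory.δ k).op
      (stdSimplex.objEquiv.symm (SimplexCategory.δ j.castSucc))
  rw [stdSimplex.map_objEquiv_symm, stdSimplex.map_objEquiv_symm]
  congr 1
  exact SimplexCategory.δ_comp_δ hjk

theorem fill_all (n : ℕ) (i : Fin (n + 2)) (u : (Λ[n + 1, i] : SSet) ⟶ X)
    (hu : ∀ (m : SimplexCategoryᵒᵖ) (z : (horn (n + 1) i).obj m), u.app m z ∈ P m) :
    ∃ g : X _⦋n + 1⦌, g ∈ P (op ⦋n + 1⦌) ∧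
      ∀ (j : Fin (n + 2)) (hj : j ≠ i), X.δ j g = u.app _ (horn.face i j hj) := by
  match n, i, u, hu with
  | 0, i, u, hu =>
    fin_cases i
    · refine ⟨X.σ 0 (u.app _ (horn.face 0 1 (by decide))), hP _ _ (hu _ _), ?_⟩
      intro j hj
      fin_cases j
      · exact absurd rfl hj
      · exact dσ_succ' X (r := 0) (Fin.ext rfl) _
    · refine ⟨X.σ 0 (u.app _ (horn.face 1 0 (by decide))), hP _ _ (hu _ _), ?_⟩
      intro j hj
      fin_cases j
      · exact dσ_self' X (r := 0) (Fin.ext rfl) _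
      · exact absurd rfl hj
  | (m + 1), i, u, hu =>
    have nat : ∀ (j : Fin (m + 2)) (z : (horn (m + 2) i).obj (op ⦋m + 1⦌)),
        X.δ j (u.app _ z) = u.app _ ((Λ[m + 2, i] : SSet).map (SimplexCategory.δ j).op z) :=
      fun j z => (ConcreteCategory.congr_hom (u.naturality (SimplexCategory.δ j).op) z).symm
    obtain ⟨g, h1, h2⟩ := fill_succ hmul P hP m i (fun j hj => u.app _ (horn.face i j hj))
      (fun j k hjk hj hk => by
        dsimp only
        exact (nat j _).trans ((congrArg (u.app _) (horn_face_compat m i j k hjk hj hk)).trans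
          (nat k _).symm))
      (fun j hj => hu _ _)
    exact ⟨g, h1, h2⟩


end MooreProof

namespace MooreProof

theorem main_aux (X Y : SSet.{0}) [∀ m, Group (X.obj m)] [∀ m, Group (Y.obj m)]
    (hmulX : ∀ ⦃m m' : SimplexCategoryᵒᵖ⦄ (φ : m ⟶ m') (a b : X.obj m),
      X.map φ (a * b) = X.map φ a * X.map φ b)
    (hmulY : ∀ ⦃m m' : SimplexCategoryᵒᵖ⦄ (φ : m ⟶ m') (a b : Y.obj m),
      Y.map φ (a * b) = Y.map φ a * Y.map φ b)
    (F : X ⟶ Y)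
    (hF : ∀ (m : SimplexCategoryᵒᵖ) (a b : X.obj m), F.app m (a * b) = F.app m a * F.app m b)
    (hsurj : ∀ m, Function.Surjective (F.app m)) :
    IsKanFibration F := by
  have hFinv : ∀ (mm : SimplexCategoryᵒᵖ) (b : X.obj mm), F.app mm b⁻¹ = (F.app mm b)⁻¹ :=
    fun mm b => (MonoidHom.mk' (F.app mm) (hF mm)).map_inv b
  intro n i
  constructor
  intro utop vbot sq
  obtain ⟨a, ha⟩ := hsurj (op ⦋n + 1⦌) (SSet.yonedaEquiv vbot)
  let w₀ : (Λ[n + 1, i] : SSet) ⟶ X := (horn (n + 1) i).ι ≫ SSet.yonedaEquiv.symm a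
  let u' : (Λ[n + 1, i] : SSet) ⟶ X :=
    { app := fun m => TypeCat.ofHom (fun z => utop.app m z * (w₀.app m z)⁻¹)
      naturality := fun m m' φ => by
        ext z
        show utop.app m' ((Λ[_, i] : SSet).map φ z) * (w₀.app m' ((Λ[_, i] : SSet).map φ z))⁻¹
            = X.map φ (utop.app m z * (w₀.app m z)⁻¹)
        have h1 : utop.app m' ((Λ[_, i] : SSet).map φ z) = X.map φ (utop.app m z) :=
          ConcreteCategory.congr_hom (utop.naturality φ) z
        have h2 : w₀.app m' ((Λ[_, i] : SSet).map φ z) = X.map φ (w₀.app m z) :=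
          ConcreteCategory.congr_hom (w₀.naturality φ) z
        rw [h1, h2, map_mul' hmulX, map_inv' hmulX] }
  have hw₀F : ∀ (mm : SimplexCategoryᵒᵖ) (z : (horn (n + 1) i).obj mm),
      F.app mm (w₀.app mm z) = vbot.app mm (((horn (n + 1) i).ι).app mm z) := by
    intro mm z
    have hv : SSet.yonedaEquiv.symm a ≫ F = vbot := by
      apply SSet.yonedaEquiv.injective
      have e1 : SSet.yonedaEquiv (SSet.yonedaEquiv.symm a ≫ F) =
          F.app _ (SSet.yonedaEquiv (SSet.yonedaEquiv.symm a)) := rfl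
      rw [e1, Equiv.apply_symm_apply, ha]
    calc F.app mm (w₀.app mm z)
        = (SSet.yonedaEquiv.symm a ≫ F).app mm (((horn _ i).ι).app mm z) := rfl
      _ = vbot.app mm (((horn _ i).ι).app mm z) := by rw [hv]
  have hsq : ∀ (mm : SimplexCategoryᵒᵖ) (z : (horn (n + 1) i).obj mm),
      F.app mm (utop.app mm z) = vbot.app mm (((horn (n + 1) i).ι).app mm z) :=
    fun mm z => ConcreteCategory.congr_hom (NatTrans.congr_app sq.w mm) z
  let P : ∀ mm : SimplexCategoryᵒᵖ, Subgroup (X.obj mm) :=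
    fun mm => (MonoidHom.mk' (F.app mm) (hF mm)).ker
  have hP : ∀ ⦃mm mm' : SimplexCategoryᵒᵖ⦄ (φ : mm ⟶ mm') (b : X.obj mm),
      b ∈ P mm → X.map φ b ∈ P mm' := by
    intro mm mm' φ b hb
    have hb' : F.app mm b = 1 := hb
    show F.app mm' (X.map φ b) = 1
    have h3 : F.app mm' (X.map φ b) = Y.map φ (F.app mm b) := ConcreteCategory.congr_hom (F.naturality φ) b
    rw [h3, hb', map_one' hmulY]
  have hu' : ∀ (mm : SimplexCategoryᵒᵖ) (z : (horn (n + 1) i).obj mm), u'.app mm z ∈ P mm := by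
    intro mm z
    show F.app mm (utop.app mm z * (w₀.app mm z)⁻¹) = 1
    rw [hF mm, hFinv, hsq mm z, hw₀F mm z, mul_inv_cancel]
  obtain ⟨g, hgP, hg⟩ := fill_all hmulX P hP n i u' hu'
  refine ⟨⟨{ l := SSet.yonedaEquiv.symm (g * a), fac_left := ?_, fac_right := ?_ }⟩⟩
  · apply horn.hom_ext
    intro j hj
    have e1 : ((horn (n + 1) i).ι ≫ SSet.yonedaEquiv.symm (g * a)).app _
        (horn.face i j hj) = X.δ j (g * a) := rfl
    rw [e1, δ_mul hmulX, hg j hj]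
    show utop.app _ (horn.face i j hj) * (w₀.app _ (horn.face i j hj))⁻¹ * X.δ j a
        = utop.app _ (horn.face i j hj)
    have e2 : w₀.app (op ⦋n⦌) (horn.face i j hj) = X.δ j a := rfl
    rw [e2, inv_mul_cancel_right]
  · apply SSet.yonedaEquiv.injective
    have e3 : SSet.yonedaEquiv (SSet.yonedaEquiv.symm (g * a) ≫ F)
        = F.app _ (SSet.yonedaEquiv (SSet.yonedaEquiv.symm (g * a))) := rfl
    rw [e3, Equiv.apply_symm_apply, hF, show F.app _ g = 1 from hgP, one_mul, ha]

end MooreProof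

open MooreProof in
theorem surjective_simplicial_group_hom_isKanFibration :
    (∀ (G H : SimplexCategoryᵒᵖ ⥤ GrpCat.{0}) (f : G ⟶ H),
        (∀ n, Function.Surjective (f.app n)) →
        IsKanFibration (Functor.whiskerRight f (forget GrpCat))) ∧
    (∀ (A B : SimplexCategoryᵒᵖ ⥤ AddCommGrpCat.{0}) (f : A ⟶ B),
        (∀ n, Function.Surjective (f.app n)) →
        IsKanFibration (Functor.whiskerRight f (forget AddCommGrpCat))) := by
  constructor
  · intro G H f hsurj
    letI : ∀ m, Group ((G ⋙ forget GrpCat).obj m) := fun m => inferInstanceAs (Group (G.obj m))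
    letI : ∀ m, Group ((H ⋙ forget GrpCat).obj m) := fun m => inferInstanceAs (Group (H.obj m))
    exact main_aux (G ⋙ forget GrpCat) (H ⋙ forget GrpCat)
      (fun m m' φ a b => (G.map φ).hom.map_mul a b)
      (fun m m' φ a b => (H.map φ).hom.map_mul a b)
      (Functor.whiskerRight f (forget GrpCat))
      (fun m a b => (f.app m).hom.map_mul a b)
      (fun m => hsurj m)
  · intro A B f hsurj
    letI : ∀ m, Group ((A ⋙ forget AddCommGrpCat).obj m) :=
      fun m => inferInstanceAs (Group (Multiplicative (A.obj m)))
    letI : ∀ m, Group ((B ⋙ forget AddCommGrpCat).obj m) :=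
      fun m => inferInstanceAs (Group (Multiplicative (B.obj m)))
    exact main_aux (A ⋙ forget AddCommGrpCat) (B ⋙ forget AddCommGrpCat)
      (fun m m' φ a b => (A.map φ).hom.map_add a b)
      (fun m m' φ a b => (B.map φ).hom.map_add a b)
      (Functor.whiskerRight f (forget AddCommGrpCat))
      (fun m a b => (f.app m).hom.map_add a b)
      (fun m => hsurj m)
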